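/- arXiv:2306.17329 — 2 statements merged into one kernel-verified Lean document; each statement's English description precedes it below -/
import Mathlib

section
/- Suppose the eigenvalues of a positive trace-class operator Σ satisfy η_i ≤ C̄ · i^(−α) for all i ≥ 1, where α > 1 and C̄ > 0. Then for every λ > 0, the effective dimension N(λ) := Σ_{i≥1} η_i/(η_i + λ) satisfies N(λ) ≤ A · λ^(−1/α), where A = C̄^(1/α) · ∫₀^∞ (1 + x^α)^(−1) dx (a finite constant depending only on C̄ and α). -/
open MeasureTheory

/-- If the (nonnegative, summable) eigenvalues of a positive trace-class operator satisfy
`η_i ≤ C̄ i^(-α)` with `α > 1`, then the effective dimension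
`N(λ) = Σ_i η_i/(η_i + λ)` satisfies `N(λ) ≤ C̄^(1/α) (∫₀^∞ (1+x^α)⁻¹ dx) λ^(-1/α)`. -/
theorem stmt3 (η : ℕ → ℝ) (C α : ℝ) (hC : 0 < C) (hα : 1 < α)
    (hη : ∀ i, 0 ≤ η i) (hsum : Summable η)
    (hdecay : ∀ i : ℕ, η i ≤ C * ((i : ℝ) + 1) ^ (-α))
    (lam : ℝ) (hlam : 0 < lam) :
    ∑' i : ℕ, η i / (η i + lam)
      ≤ (C ^ (1 / α) * ∫ x in Set.Ioi (0 : ℝ), (1 + x ^ α)⁻¹) * lam ^ (-(1 / α)) := by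
  have hα0 : (0:ℝ) < α := lt_trans one_pos hα
  set c : ℝ := lam / C with hc
  have hc0 : 0 < c := div_pos hlam hC
  set f : ℝ → ℝ := fun x => (1 + c * x ^ α)⁻¹ with hf
  have hden : ∀ x : ℝ, 0 ≤ x → 0 < 1 + c * x ^ α := by
    intro x hx
    have : 0 ≤ c * x ^ α := mul_nonneg hc0.le (Real.rpow_nonneg hx _)
    linarith
  have hfnn : ∀ x : ℝ, 0 ≤ x → 0 ≤ f x := fun x hx => (inv_pos.mpr (hden x hx)).le
  have hanti : AntitoneOn f (Set.Ici 0) := by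
    intro x hx y hy hxy
    have h1 := Real.rpow_le_rpow hx hxy hα0.le
    have h2 := hden x hx
    simp only [hf]
    apply inv_anti₀ h2
    nlinarith
  have hcont : ContinuousOn f (Set.Ici 0) := by
    apply ContinuousOn.inv₀
    · exact continuousOn_const.add (continuousOn_const.mul
        (continuousOn_id.rpow_const (fun x _ => Or.inr hα0.le)))
    · intro x hx
      exact (hden x hx).ne'
  -- integrability
  have hint : IntegrableOn f (Set.Ioi (0:ℝ)) := by
    rw [← Set.Ioc_union_Ioi_eq_Ioi (zero_le_one (α := ℝ))]
    apply IntegrableOn.union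
    · exact ((hcont.mono Set.Icc_subset_Ici_self).integrableOn_Icc).mono_set
        Set.Ioc_subset_Icc_self
    · have hi : IntegrableOn (fun x : ℝ => c⁻¹ * x ^ (-α)) (Set.Ioi 1) :=
        (integrableOn_Ioi_rpow_of_lt (by linarith) one_pos).const_mul _
      apply hi.mono' ((hcont.mono fun x (hx : x ∈ Set.Ioi (1:ℝ)) => Set.mem_Ici.mpr (le_of_lt (lt_of_lt_of_le one_pos
        (le_of_lt (Set.mem_Ioi.mp hx))))).aestronglyMeasurable measurableSet_Ioi)
      filter_upwards [self_mem_ae_restrict (measurableSet_Ioi : MeasurableSet (Set.Ioi (1:ℝ)))]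
        with x hx
      have hx0 : (0:ℝ) < x := lt_trans one_pos hx
      have hp : 0 < x ^ α := Real.rpow_pos_of_pos hx0 _
      rw [Real.norm_of_nonneg (hfnn x hx0.le)]
      have h1 : f x ≤ (c * x ^ α)⁻¹ := by
        apply inv_anti₀ (by positivity)
        linarith
      calc f x ≤ (c * x ^ α)⁻¹ := h1
        _ = c⁻¹ * x ^ (-α) := by
            rw [mul_inv, Real.rpow_neg hx0.le]
  -- term bound
  have hterm : ∀ i : ℕ, η i / (η i + lam) ≤ f ((i:ℝ)+1) := by
    intro i
    have hb : (0:ℝ) < (i:ℝ) + 1 := by positivity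
    have hp0 : 0 < ((i:ℝ)+1) ^ α := Real.rpow_pos_of_pos hb _
    set s : ℝ := C * ((i:ℝ)+1) ^ (-α) with hs
    have hs0 : 0 < s := mul_pos hC (Real.rpow_pos_of_pos hb _)
    have h1 : η i / (η i + lam) ≤ s / (s + lam) := by
      rw [div_le_div_iff₀ (by linarith [hη i]) (by linarith)]
      nlinarith [hdecay i, hη i]
    have h2 : s / (s + lam) = f ((i:ℝ)+1) := by
      simp only [hf, hs, hc, Real.rpow_neg hb.le]
      field_simp
    rw [← h2]; exact h1
  -- partial sums ≤ integral
  have hsum_int : ∀ n : ℕ, ∑ i ∈ Finset.range n, f ((i:ℝ)+1) ≤ ∫ x in Set.Ioi (0:ℝ), f x := by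
    intro n
    have hanti' : AntitoneOn f (Set.Icc (0:ℝ) (0 + n)) := hanti.mono (fun x hx => hx.1)
    have h1 := hanti'.sum_le_integral
    have h1' : ∑ i ∈ Finset.range n, f ((i:ℝ)+1) ≤ ∫ x in (0:ℝ)..(0+n:ℝ), f x := by
      convert h1 using 2 with i
      push_cast
      ring
    have h2 : ∫ x in (0:ℝ)..(0+n:ℝ), f x = ∫ x in Set.Ioc (0:ℝ) n, f x := by
      rw [zero_add, intervalIntegral.integral_of_le (by positivity)]
    have h3 : ∫ x in Set.Ioc (0:ℝ) n, f x ≤ ∫ x in Set.Ioi (0:ℝ), f x := by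
      apply setIntegral_mono_set hint
      · filter_upwards [self_mem_ae_restrict (measurableSet_Ioi : MeasurableSet (Set.Ioi (0:ℝ)))]
          with x hx
        exact hfnn x (le_of_lt hx)
      · exact HasSubset.Subset.eventuallyLE Set.Ioc_subset_Ioi_self
    calc ∑ i ∈ Finset.range n, f ((i:ℝ)+1) ≤ ∫ x in (0:ℝ)..(0+n:ℝ), f x := h1'
      _ = ∫ x in Set.Ioc (0:ℝ) n, f x := h2
      _ ≤ ∫ x in Set.Ioi (0:ℝ), f x := h3
  have htsum : ∑' i : ℕ, η i / (η i + lam) ≤ ∫ x in Set.Ioi (0:ℝ), f x := by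
    apply Real.tsum_le_of_sum_range_le
      (fun i => div_nonneg (hη i) (by linarith [hη i]))
    intro n
    exact le_trans (Finset.sum_le_sum fun i _ => hterm i) (hsum_int n)
  -- compute the integral
  have hkey : ∫ x in Set.Ioi (0:ℝ), f x
      = (C ^ (1/α) * ∫ x in Set.Ioi (0:ℝ), (1 + x ^ α)⁻¹) * lam ^ (-(1/α)) := by
    set b : ℝ := c ^ (α⁻¹) with hbdef
    have hb0 : 0 < b := Real.rpow_pos_of_pos hc0 _
    have hbα : b ^ α = c := by
      rw [hbdef, ← Real.rpow_mul hc0.le, inv_mul_cancel₀ hα0.ne', Real.rpow_one]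
    have hcongr : ∫ x in Set.Ioi (0:ℝ), f x
        = ∫ x in Set.Ioi (0:ℝ), (1 + (b * x) ^ α)⁻¹ := by
      apply setIntegral_congr_fun measurableSet_Ioi
      intro x hx
      simp only [hf]
      rw [Real.mul_rpow hb0.le (le_of_lt hx), hbα]
    rw [hcongr, integral_comp_mul_left_Ioi (fun y => (1 + y ^ α)⁻¹) 0 hb0, mul_zero,
      smul_eq_mul]
    have hbinv : b⁻¹ = C ^ (1/α) * lam ^ (-(1/α)) := by
      rw [hbdef, ← Real.inv_rpow hc0.le, hc, inv_div, Real.div_rpow hC.le hlam.le,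
        div_eq_mul_inv, ← Real.rpow_neg hlam.le, one_div]
    rw [hbinv]
    ring
  rw [← hkey]
  exact htsum
end

section
/- Let Σ and Σ̂ be positive self-adjoint bounded operators on a Hilbert space H and λ > 0. If the operator B := (Σ + λI)^(−1/2)(Σ − Σ̂)(Σ + λI)^(−1/2) satisfies ‖B‖ ≤ 1/2, then ‖(Σ̂ + λI)^(−1/2)(Σ + λI)^(1/2)‖ ≤ √2. -/
open ContinuousLinearMap

/-- If `Σ, Σ̂` are positive self-adjoint bounded operators, `λ > 0`, and
`B = (Σ+λI)^(−1/2)(Σ−Σ̂)(Σ+λI)^(−1/2)` has `‖B‖ ≤ 1/2`, then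
`‖(Σ̂+λI)^(−1/2)(Σ+λI)^(1/2)‖ ≤ √2` (operator powers via functional calculus). -/
theorem stmt18 {H : Type*} [NormedAddCommGroup H] [InnerProductSpace ℂ H] [CompleteSpace H]
    (S Sh : H →L[ℂ] H) (hS : S.IsPositive) (hSh : Sh.IsPositive)
    (lam : ℝ) (hlam : 0 < lam)
    (hB : ‖cfc (fun x : ℝ => (x + lam) ^ (-(1 / 2) : ℝ)) S * (S - Sh) *
        cfc (fun x : ℝ => (x + lam) ^ (-(1 / 2) : ℝ)) S‖ ≤ 1 / 2) :
    ‖cfc (fun x : ℝ => (x + lam) ^ (-(1 / 2) : ℝ)) Sh *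
        cfc (fun x : ℝ => (x + lam) ^ ((1 / 2) : ℝ)) S‖ ≤ Real.sqrt 2 := by
  have hSsa : IsSelfAdjoint S := hS.isSelfAdjoint
  have hShsa : IsSelfAdjoint Sh := hSh.isSelfAdjoint
  have hS0 : (0 : H →L[ℂ] H) ≤ S := (nonneg_iff_isPositive S).mpr hS
  have hSh0 : (0 : H →L[ℂ] H) ≤ Sh := (nonneg_iff_isPositive Sh).mpr hSh
  have hspecS : ∀ x ∈ spectrum ℝ S, 0 < x + lam := fun x hx =>
    add_pos_of_nonneg_of_pos (spectrum_nonneg_of_nonneg hS0 hx) hlam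
  have hspecSh : ∀ x ∈ spectrum ℝ Sh, 0 < x + lam := fun x hx =>
    add_pos_of_nonneg_of_pos (spectrum_nonneg_of_nonneg hSh0 hx) hlam
  -- continuity of the relevant functions on the spectra
  have contS : ∀ r : ℝ, ContinuousOn (fun x : ℝ => (x + lam) ^ r) (spectrum ℝ S) := fun r =>
    ContinuousOn.rpow_const (by fun_prop) (fun x hx => Or.inl (hspecS x hx).ne')
  have contSh : ∀ r : ℝ, ContinuousOn (fun x : ℝ => (x + lam) ^ r) (spectrum ℝ Sh) := fun r =>
    ContinuousOn.rpow_const (by fun_prop) (fun x hx => Or.inl (hspecSh x hx).ne')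
  have contES : ContinuousOn (fun x : ℝ => x + lam) (spectrum ℝ S) := by fun_prop
  have contESh : ContinuousOn (fun x : ℝ => x + lam) (spectrum ℝ Sh) := by fun_prop
  set A : H →L[ℂ] H := cfc (fun x : ℝ => (x + lam) ^ (-(1 / 2) : ℝ)) S with hA
  set C : H →L[ℂ] H := cfc (fun x : ℝ => (x + lam) ^ (-(1 / 2) : ℝ)) Sh with hC
  set P : H →L[ℂ] H := cfc (fun x : ℝ => (x + lam) ^ ((1 / 2) : ℝ)) S with hP
  set c : H →L[ℂ] H := algebraMap ℝ (H →L[ℂ] H) lam with hc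
  have hPsa : IsSelfAdjoint P := by rw [hP]; exact IsSelfAdjoint.cfc
  have hCsa : IsSelfAdjoint C := by rw [hC]; exact IsSelfAdjoint.cfc
  -- (S + λ) as cfc
  have hES : cfc (fun x : ℝ => x + lam) S = S + c := by
    have := cfc_add_const lam (id : ℝ → ℝ) S (by fun_prop) hSsa
    simpa [cfc_id ℝ S hSsa] using this
  have hESh : cfc (fun x : ℝ => x + lam) Sh = Sh + c := by
    have := cfc_add_const lam (id : ℝ → ℝ) Sh (by fun_prop) hShsa
    simpa [cfc_id ℝ Sh hShsa] using this
  -- P * A = 1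
  have h_PA : P * A = 1 := by
    rw [hP, hA, ← cfc_mul _ _ S (contS _) (contS _)]
    calc cfc (fun x : ℝ => (x + lam) ^ ((1 / 2) : ℝ) * (x + lam) ^ (-(1 / 2) : ℝ)) S
        = cfc (1 : ℝ → ℝ) S := by
          refine cfc_congr fun x hx => ?_
          have h := hspecS x hx
          rw [← Real.rpow_add h]
          norm_num
      _ = 1 := cfc_one ℝ S hSsa
  -- A * P = 1
  have h_AP : A * P = 1 := by
    rw [hP, hA, ← cfc_mul _ _ S (contS _) (contS _)]
    calc cfc (fun x : ℝ => (x + lam) ^ (-(1 / 2) : ℝ) * (x + lam) ^ ((1 / 2) : ℝ)) S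
        = cfc (1 : ℝ → ℝ) S := by
          refine cfc_congr fun x hx => ?_
          have h := hspecS x hx
          rw [← Real.rpow_add h]
          norm_num
      _ = 1 := cfc_one ℝ S hSsa
  -- A * (S + c) * A = 1
  have h1 : A * (S + c) * A = 1 := by
    rw [← hES, hA, ← cfc_mul _ _ S (contS _) contES,
      ← cfc_mul (fun x : ℝ => (x + lam) ^ (-(1 / 2) : ℝ) * (x + lam)) _ S ((contS _).mul contES) (contS _)]
    calc cfc (fun x : ℝ => (x + lam) ^ (-(1 / 2) : ℝ) * (x + lam) * (x + lam) ^ (-(1 / 2) : ℝ)) S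
        = cfc (1 : ℝ → ℝ) S := by
          refine cfc_congr fun x hx => ?_
          have h := hspecS x hx
          show (x + lam) ^ (-(1 / 2) : ℝ) * (x + lam) * (x + lam) ^ (-(1 / 2) : ℝ) = 1
          rw [mul_right_comm, ← Real.rpow_add h,
            show (-(1 / 2 : ℝ)) + -(1 / 2) = -1 by norm_num, Real.rpow_neg_one]
          exact inv_mul_cancel₀ h.ne'
      _ = 1 := cfc_one ℝ S hSsa
  -- C * C = (Sh + λ)⁻¹
  have hCC : C * C = cfc (fun x : ℝ => (x + lam) ^ (-1 : ℝ)) Sh := by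
    rw [hC, ← cfc_mul _ _ Sh (contSh _) (contSh _)]
    refine cfc_congr fun x hx => ?_
    have h := hspecSh x hx
    rw [← Real.rpow_add h]
    norm_num
  -- (C * C) * (Sh + c) = 1
  have hCCE : (C * C) * (Sh + c) = 1 := by
    rw [hCC, ← hESh, ← cfc_mul _ _ Sh (contSh _) contESh]
    calc cfc (fun x : ℝ => (x + lam) ^ (-1 : ℝ) * (x + lam)) Sh
        = cfc (1 : ℝ → ℝ) Sh := by
          refine cfc_congr fun x hx => ?_
          have h := hspecSh x hx
          show (x + lam) ^ (-1 : ℝ) * (x + lam) = 1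
          rw [Real.rpow_neg_one]
          exact inv_mul_cancel₀ h.ne'
      _ = 1 := cfc_one ℝ Sh hShsa
  -- the perturbation B
  set B : H →L[ℂ] H := A * (S - Sh) * A with hBdef
  have hOneSub : (1 : H →L[ℂ] H) - B = A * (Sh + c) * A := by
    rw [← h1, hBdef]; noncomm_ring
  set T : H →L[ℂ] H := P * (C * C) * P with hT
  -- helper rewriting lemmas
  have hPA' : ∀ X : H →L[ℂ] H, P * (A * X) = X := fun X => by
    rw [← mul_assoc, h_PA, one_mul]
  have hCCE' : ∀ X : H →L[ℂ] H, C * (C * ((Sh + c) * X)) = X := fun X => by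
    calc C * (C * ((Sh + c) * X)) = ((C * C) * (Sh + c)) * X := by simp only [mul_assoc]
      _ = X := by rw [hCCE, one_mul]
  have hT1 : T * (1 - B) = 1 := by
    rw [hOneSub, hT]
    calc P * (C * C) * P * (A * (Sh + c) * A)
        = P * (C * (C * (P * (A * ((Sh + c) * A))))) := by simp only [mul_assoc]
      _ = P * (C * (C * ((Sh + c) * A))) := by rw [hPA']
      _ = P * A := by rw [hCCE']
      _ = 1 := h_PA
  -- geometric series bound
  have hBlt : ‖B‖ < 1 := lt_of_le_of_lt hB (by norm_num)
  have hTsum : T = ∑' n : ℕ, B ^ n := by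
    calc T = T * ((1 - B) * ∑' n : ℕ, B ^ n) := by
          rw [mul_neg_geom_series B hBlt, mul_one]
      _ = (T * (1 - B)) * ∑' n : ℕ, B ^ n := (mul_assoc _ _ _).symm
      _ = ∑' n : ℕ, B ^ n := by rw [hT1, one_mul]
  have hTnorm : ‖T‖ ≤ 2 := by
    rw [hTsum]
    have h := tsum_geometric_le_of_norm_lt_one B hBlt
    have h1 : ‖(1 : H →L[ℂ] H)‖ ≤ 1 := by
      rw [ContinuousLinearMap.one_def]
      exact ContinuousLinearMap.norm_id_le
    have h2 : (1 - ‖B‖)⁻¹ ≤ 2 := by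
      have hhalf : (1 : ℝ) / 2 ≤ 1 - ‖B‖ := by linarith
      calc (1 - ‖B‖)⁻¹ ≤ ((1 : ℝ) / 2)⁻¹ := by
            apply inv_anti₀ (by norm_num) hhalf
        _ = 2 := by norm_num
    linarith
  -- C* identity
  have hTP : star (C * P) * (C * P) = T := by
    rw [star_mul, hPsa.star_eq, hCsa.star_eq, hT]
    noncomm_ring
  have hfinal : ‖C * P‖ * ‖C * P‖ ≤ 2 := by
    calc ‖C * P‖ * ‖C * P‖ = ‖star (C * P) * (C * P)‖ :=
          (CStarRing.norm_star_mul_self).symm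
      _ = ‖T‖ := by rw [hTP]
      _ ≤ 2 := hTnorm
  rw [Real.le_sqrt (norm_nonneg _) (by norm_num)]
  nlinarith [hfinal, norm_nonneg (C * P)]
end
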